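/- Let g : [0,1]² → ℝ be integrable with respect to Lebesgue measure on [0,1]². If ∫_{[0,1]²} exp(z·t₁ + y·t₂)·g(t₁,t₂) d(t₁,t₂) = 0 for every (z,y) ∈ (0,1)², then g = 0 almost everywhere on [0,1]². -/

import Mathlib

open MeasureTheory

open Set Filter

private lemma keystep (g : ℝ × ℝ → ℝ)
    (hint : IntegrableOn g (Set.Icc (0:ℝ) 1 ×ˢ Set.Icc (0:ℝ) 1) volume)
    (φ c d : ℝ × ℝ → ℝ) (hφc : Continuous φ) (hcc : Continuous c) (hdc : Continuous d)
    (hφb : ∀ p ∈ Set.Icc (0:ℝ) 1 ×ˢ Set.Icc (0:ℝ) 1, |φ p| ≤ 1)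
    (hcb : ∀ p ∈ Set.Icc (0:ℝ) 1 ×ˢ Set.Icc (0:ℝ) 1, |c p| ≤ 1)
    (hdb : ∀ p ∈ Set.Icc (0:ℝ) 1 ×ˢ Set.Icc (0:ℝ) 1, |d p| ≤ 1)
    (h0 : ∀ z ∈ Set.Ioo (0:ℝ) 1,
      ∫ p in Set.Icc (0:ℝ) 1 ×ˢ Set.Icc (0:ℝ) 1,
        φ p * Real.exp (z * c p + d p) * g p = 0) :
    ∀ z ∈ Set.Ioo (0:ℝ) 1,
      ∫ p in Set.Icc (0:ℝ) 1 ×ˢ Set.Icc (0:ℝ) 1,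
        (c p * φ p) * Real.exp (z * c p + d p) * g p = 0 := by
  intro z₀ hz₀
  have hKm : MeasurableSet (Set.Icc (0:ℝ) 1 ×ˢ Set.Icc (0:ℝ) 1) :=
    measurableSet_Icc.prod measurableSet_Icc
  set μ : Measure (ℝ × ℝ) := volume.restrict (Set.Icc (0:ℝ) 1 ×ˢ Set.Icc (0:ℝ) 1) with hμ
  -- measurability of integrands
  have hmeas : ∀ z : ℝ, AEStronglyMeasurable
      (fun p : ℝ × ℝ => φ p * Real.exp (z * c p + d p) * g p) μ := fun z =>
    ((hφc.mul (((hcc.const_smul z).add hdc).rexp)).aestronglyMeasurable).mul hint.1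
  have hmeas' : ∀ z : ℝ, AEStronglyMeasurable
      (fun p : ℝ × ℝ => (c p * φ p) * Real.exp (z * c p + d p) * g p) μ := fun z =>
    (((hcc.mul hφc).mul (((hcc.const_smul z).add hdc).rexp)).aestronglyMeasurable).mul hint.1
  -- bound on |z| for z in the ball
  have hzb : ∀ x ∈ Metric.ball z₀ 1, |x| ≤ 2 := by
    intro x hx
    have h1 : |x - z₀| < 1 := by simpa [Real.dist_eq] using hx
    have h2 : |z₀| ≤ 1 := abs_le.2 ⟨by linarith [hz₀.1], le_of_lt hz₀.2⟩
    have := abs_sub_abs_le_abs_sub x z₀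
    linarith
  have hexp : ∀ x : ℝ, |x| ≤ 2 → ∀ p ∈ Set.Icc (0:ℝ) 1 ×ˢ Set.Icc (0:ℝ) 1,
      Real.exp (x * c p + d p) ≤ Real.exp 4 := by
    intro x hx p hp
    apply Real.exp_le_exp.2
    have h1 : x * c p ≤ |x| * |c p| := le_trans (le_abs_self _) (le_of_eq (abs_mul _ _))
    have h2 : |x| * |c p| ≤ 2 * 1 :=
      mul_le_mul hx (hcb p hp) (abs_nonneg _) (by norm_num)
    have h3 : d p ≤ 1 := le_trans (le_abs_self _) (hdb p hp)
    linarith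
  have h_bound : ∀ᵐ p ∂μ, ∀ x ∈ Metric.ball z₀ 1,
      ‖(c p * φ p) * Real.exp (x * c p + d p) * g p‖ ≤ Real.exp 4 * ‖g p‖ := by
    filter_upwards [ae_restrict_mem hKm] with p hp x hx
    have hcφ : |c p * φ p| ≤ 1 := by
      rw [abs_mul]
      exact mul_le_one₀ (hcb p hp) (abs_nonneg _) (hφb p hp)
    calc ‖(c p * φ p) * Real.exp (x * c p + d p) * g p‖
        = |c p * φ p| * Real.exp (x * c p + d p) * ‖g p‖ := by
          rw [norm_mul, norm_mul, Real.norm_eq_abs, Real.norm_eq_abs,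
            abs_of_pos (Real.exp_pos _), Real.norm_eq_abs]
      _ ≤ 1 * Real.exp 4 * ‖g p‖ :=
          mul_le_mul (mul_le_mul hcφ (hexp x (hzb x hx) p hp) (Real.exp_pos _).le
            one_pos.le) le_rfl (norm_nonneg _) (by positivity)
      _ = Real.exp 4 * ‖g p‖ := by ring
  have hF_int : Integrable (fun p : ℝ × ℝ => φ p * Real.exp (z₀ * c p + d p) * g p) μ := by
    apply hint.bdd_mul ((hφc.mul (((hcc.const_smul z₀).add hdc).rexp)).aestronglyMeasurable)
    filter_upwards [ae_restrict_mem hKm] with p hp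
    have := hexp z₀ (hzb z₀ (Metric.mem_ball_self one_pos)) p hp
    calc ‖φ p * Real.exp (z₀ * c p + d p)‖
        = |φ p| * Real.exp (z₀ * c p + d p) := by
          rw [norm_mul, Real.norm_eq_abs, Real.norm_eq_abs, abs_of_pos (Real.exp_pos _)]
      _ ≤ 1 * Real.exp 4 := mul_le_mul (hφb p hp) this (Real.exp_pos _).le one_pos.le
      _ = Real.exp 4 := one_mul _
  have h_diff : ∀ᵐ p ∂μ, ∀ x ∈ Metric.ball z₀ 1,
      HasDerivAt (fun z => φ p * Real.exp (z * c p + d p) * g p)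
        ((c p * φ p) * Real.exp (x * c p + d p) * g p) x := by
    refine Eventually.of_forall fun p => fun x _ => ?_
    have h1 : HasDerivAt (fun z : ℝ => z * c p + d p) (c p) x := by
      simpa using ((hasDerivAt_id x).mul_const (c p)).add_const (d p)
    have h2 := h1.exp
    have h3 := (h2.const_mul (φ p)).mul_const (g p)
    refine h3.congr_deriv ?_
    ring
  have key := hasDerivAt_integral_of_dominated_loc_of_deriv_le (μ := μ)
      (F := fun z p => φ p * Real.exp (z * c p + d p) * g p)
      (F' := fun z p => (c p * φ p) * Real.exp (z * c p + d p) * g p)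
      (bound := fun p => Real.exp 4 * ‖g p‖)
      (Metric.ball_mem_nhds z₀ one_pos) (Eventually.of_forall hmeas) hF_int (hmeas' z₀) h_bound
      ((hint.norm.const_mul (Real.exp 4))) h_diff
  obtain ⟨-, hder⟩ := key
  have hev : (fun z => ∫ p, φ p * Real.exp (z * c p + d p) * g p ∂μ) =ᶠ[nhds z₀]
      fun _ => (0:ℝ) :=
    eventuallyEq_of_mem (Ioo_mem_nhds hz₀.1 hz₀.2) h0
  have hder0 : HasDerivAt (fun _ : ℝ => (0:ℝ))
      (∫ p, (c p * φ p) * Real.exp (z₀ * c p + d p) * g p ∂μ) z₀ :=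
    hder.congr_of_eventuallyEq hev.symm
  exact (hder0.unique (hasDerivAt_const z₀ 0))

private lemma monbound (m n : ℕ) : ∀ p ∈ Set.Icc (0:ℝ) 1 ×ˢ Set.Icc (0:ℝ) 1,
    |p.1 ^ m * p.2 ^ n| ≤ 1 := by
  rintro p ⟨hp1, hp2⟩
  rw [abs_mul, abs_pow, abs_pow]
  exact mul_le_one₀ (pow_le_one₀ (abs_nonneg _) (abs_le.2 ⟨by linarith [hp1.1], hp1.2⟩))
    (pow_nonneg (abs_nonneg _) _)
    (pow_le_one₀ (abs_nonneg _) (abs_le.2 ⟨by linarith [hp2.1], hp2.2⟩))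

private lemma moments (g : ℝ × ℝ → ℝ)
    (hint : IntegrableOn g (Set.Icc (0:ℝ) 1 ×ˢ Set.Icc (0:ℝ) 1) volume)
    (hzero : ∀ z ∈ Set.Ioo (0:ℝ) 1, ∀ y ∈ Set.Ioo (0:ℝ) 1,
      ∫ p in Set.Icc (0:ℝ) 1 ×ˢ Set.Icc (0:ℝ) 1,
        Real.exp (z * p.1 + y * p.2) * g p = 0) :
    ∀ n m : ℕ, ∀ z ∈ Set.Ioo (0:ℝ) 1, ∀ y ∈ Set.Ioo (0:ℝ) 1,
      ∫ p in Set.Icc (0:ℝ) 1 ×ˢ Set.Icc (0:ℝ) 1,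
        (p.1 ^ m * p.2 ^ n) * Real.exp (z * p.1 + y * p.2) * g p = 0 := by
  intro n
  induction n with
  | zero =>
    intro m
    induction m with
    | zero =>
      intro z hz y hy
      calc ∫ p in Set.Icc (0:ℝ) 1 ×ˢ Set.Icc (0:ℝ) 1,
            (p.1 ^ 0 * p.2 ^ 0) * Real.exp (z * p.1 + y * p.2) * g p
          = ∫ p in Set.Icc (0:ℝ) 1 ×ˢ Set.Icc (0:ℝ) 1,
            Real.exp (z * p.1 + y * p.2) * g p :=
            integral_congr_ae (Eventually.of_forall fun p => by simp)
        _ = 0 := hzero z hz y hy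
    | succ m ih =>
      intro z hz y hy
      have hyb : ∀ p ∈ Set.Icc (0:ℝ) 1 ×ˢ Set.Icc (0:ℝ) 1, |y * p.2| ≤ 1 := by
        rintro p ⟨-, hp2⟩
        rw [abs_mul]
        exact mul_le_one₀ (abs_le.2 ⟨by linarith [hy.1], hy.2.le⟩) (abs_nonneg _)
          (abs_le.2 ⟨by linarith [hp2.1], hp2.2⟩)
      have key := keystep g hint (fun p => p.1 ^ m * p.2 ^ 0) (fun p => p.1)
        (fun p => y * p.2)
        ((continuous_fst.pow m).mul (continuous_snd.pow 0)) continuous_fst (continuous_const.mul continuous_snd)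
        (monbound m 0) (fun p hp => by
          rw [abs_le]; exact ⟨by linarith [hp.1.1], hp.1.2⟩) hyb
        (fun z' hz' => by
          have := ih z' hz' y hy
          calc ∫ p in Set.Icc (0:ℝ) 1 ×ˢ Set.Icc (0:ℝ) 1,
              (p.1 ^ m * p.2 ^ 0) * Real.exp (z' * p.1 + y * p.2) * g p
            = ∫ p in Set.Icc (0:ℝ) 1 ×ˢ Set.Icc (0:ℝ) 1,
              (p.1 ^ m * p.2 ^ 0) * Real.exp (z' * p.1 + y * p.2) * g p := rfl
            _ = 0 := this) z hz
      calc ∫ p in Set.Icc (0:ℝ) 1 ×ˢ Set.Icc (0:ℝ) 1,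
            (p.1 ^ (m + 1) * p.2 ^ 0) * Real.exp (z * p.1 + y * p.2) * g p
          = ∫ p in Set.Icc (0:ℝ) 1 ×ˢ Set.Icc (0:ℝ) 1,
            (p.1 * (p.1 ^ m * p.2 ^ 0)) * Real.exp (z * p.1 + y * p.2) * g p :=
            integral_congr_ae (Eventually.of_forall fun p => by ring_nf)
        _ = 0 := key
  | succ n ih =>
    intro m z hz y hy
    have hzb : ∀ p ∈ Set.Icc (0:ℝ) 1 ×ˢ Set.Icc (0:ℝ) 1, |z * p.1| ≤ 1 := by
      rintro p ⟨hp1, -⟩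
      rw [abs_mul]
      exact mul_le_one₀ (abs_le.2 ⟨by linarith [hz.1], hz.2.le⟩) (abs_nonneg _)
        (abs_le.2 ⟨by linarith [hp1.1], hp1.2⟩)
    have key := keystep g hint (fun p => p.1 ^ m * p.2 ^ n) (fun p => p.2)
      (fun p => z * p.1)
      ((continuous_fst.pow m).mul (continuous_snd.pow n)) continuous_snd (continuous_const.mul continuous_fst)
      (monbound m n) (fun p hp => by
        rw [abs_le]; exact ⟨by linarith [hp.2.1], hp.2.2⟩) hzb
      (fun y' hy' => by
        have := ih m z hz y' hy'
        calc ∫ p in Set.Icc (0:ℝ) 1 ×ˢ Set.Icc (0:ℝ) 1,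
            (p.1 ^ m * p.2 ^ n) * Real.exp (y' * p.2 + z * p.1) * g p
          = ∫ p in Set.Icc (0:ℝ) 1 ×ˢ Set.Icc (0:ℝ) 1,
            (p.1 ^ m * p.2 ^ n) * Real.exp (z * p.1 + y' * p.2) * g p :=
            integral_congr_ae (Eventually.of_forall fun p => by dsimp only; rw [add_comm (y' * p.2)])
          _ = 0 := this) y hy
    calc ∫ p in Set.Icc (0:ℝ) 1 ×ˢ Set.Icc (0:ℝ) 1,
          (p.1 ^ m * p.2 ^ (n + 1)) * Real.exp (z * p.1 + y * p.2) * g p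
        = ∫ p in Set.Icc (0:ℝ) 1 ×ˢ Set.Icc (0:ℝ) 1,
          (p.2 * (p.1 ^ m * p.2 ^ n)) * Real.exp (y * p.2 + z * p.1) * g p :=
          integral_congr_ae (Eventually.of_forall fun p => by
            dsimp only; rw [add_comm (z * p.1)]; ring)
      _ = 0 := key

/-- Bierens-type completeness: if an integrable `g` on `[0,1]²` satisfies
`∫ exp(z·t₁ + y·t₂)·g(t₁,t₂) d(t₁,t₂) = 0` for every `(z,y) ∈ (0,1)²`, then
`g = 0` a.e. on `[0,1]²`. -/
theorem stmt5 (g : ℝ × ℝ → ℝ)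
    (hint : IntegrableOn g (Set.Icc (0:ℝ) 1 ×ˢ Set.Icc (0:ℝ) 1)
      (volume : Measure (ℝ × ℝ)))
    (hzero : ∀ z ∈ Set.Ioo (0:ℝ) 1, ∀ y ∈ Set.Ioo (0:ℝ) 1,
      ∫ p in Set.Icc (0:ℝ) 1 ×ˢ Set.Icc (0:ℝ) 1,
        Real.exp (z * p.1 + y * p.2) * g p = 0) :
    g =ᵐ[(volume : Measure (ℝ × ℝ)).restrict (Set.Icc (0:ℝ) 1 ×ˢ Set.Icc (0:ℝ) 1)]
      0 := by
  have hhalf : (2⁻¹ : ℝ) ∈ Set.Ioo (0:ℝ) 1 := by norm_num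
  set K : Set (ℝ × ℝ) := Set.Icc (0:ℝ) 1 ×ˢ Set.Icc (0:ℝ) 1 with hKdef
  have hKm : MeasurableSet K := measurableSet_Icc.prod measurableSet_Icc
  have hKc : IsCompact K := isCompact_Icc.prod isCompact_Icc
  haveI : CompactSpace ↥K := isCompact_iff_compactSpace.1 hKc
  set μ : Measure (ℝ × ℝ) := volume.restrict K with hμdef
  set G : ℝ × ℝ → ℝ := fun p => Real.exp (2⁻¹ * p.1 + 2⁻¹ * p.2) * g p with hGdef
  -- moments of G vanish
  have hmom : ∀ m n : ℕ, ∫ p, (p.1 ^ m * p.2 ^ n) * G p ∂μ = 0 := by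
    intro m n
    have := moments g hint hzero n m 2⁻¹ hhalf 2⁻¹ hhalf
    calc ∫ p, (p.1 ^ m * p.2 ^ n) * G p ∂μ
        = ∫ p in K, (p.1 ^ m * p.2 ^ n) * Real.exp (2⁻¹ * p.1 + 2⁻¹ * p.2) * g p :=
          integral_congr_ae (Eventually.of_forall fun p => by simp [hGdef, mul_assoc])
      _ = 0 := this
  -- G integrable
  have hGint : Integrable G μ := by
    apply hint.bdd_mul
      ((continuous_const.mul continuous_fst).add
        ((continuous_const.mul continuous_snd))).rexp.aestronglyMeasurable
    filter_upwards [ae_restrict_mem hKm] with p hp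
    rw [Real.norm_eq_abs, abs_of_pos (Real.exp_pos _)]
    have hle : Real.exp (2⁻¹ * p.1 + 2⁻¹ * p.2) ≤ Real.exp 1 := by
      apply Real.exp_le_exp.2
      obtain ⟨hp1, hp2⟩ := hp
      have := hp1.2; have := hp2.2
      linarith
    exact hle
  -- the extension operator
  set E : C(↥K, ℝ) → (ℝ × ℝ → ℝ) :=
    fun a p => if h : p ∈ K then a ⟨p, h⟩ else 0 with hEdef
  have hEmeas : ∀ a : C(↥K, ℝ), AEStronglyMeasurable (E a) μ := by
    intro a
    apply ContinuousOn.aestronglyMeasurable _ hKm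
    rw [continuousOn_iff_continuous_restrict]
    have : K.domRestrict (E a) = fun q : ↥K => a q := by
      funext q
      simp [hEdef, Set.domRestrict, q.2]
    rw [this]
    exact a.continuous
  have hEbd : ∀ a : C(↥K, ℝ), ∀ p, ‖E a p‖ ≤ ‖a‖ := by
    intro a p
    by_cases h : p ∈ K
    · simp only [hEdef, dif_pos h]
      exact a.norm_coe_le_norm ⟨p, h⟩
    · simp only [hEdef, dif_neg h, norm_zero]
      exact norm_nonneg a
  have hInt : ∀ a : C(↥K, ℝ), Integrable (fun p => E a p * G p) μ := fun a =>
    hGint.bdd_mul (hEmeas a) (Eventually.of_forall (hEbd a))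
  -- the linear functional
  set L₀ : C(↥K, ℝ) →ₗ[ℝ] ℝ :=
    { toFun := fun a => ∫ p, E a p * G p ∂μ
      map_add' := by
        intro a b
        have h1 : (fun p => E (a + b) p * G p)
            = fun p => E a p * G p + E b p * G p := by
          funext p
          by_cases h : p ∈ K <;> simp [hEdef, h, add_mul]
        simp only [h1]
        exact integral_add (hInt a) (hInt b)
      map_smul' := by
        intro c a
        have h1 : (fun p => E (c • a) p * G p) = fun p => c * (E a p * G p) := by
          funext p
          by_cases h : p ∈ K <;> simp [hEdef, h, mul_assoc]
        simp only [h1, integral_const_mul, RingHom.id_apply, smul_eq_mul] } with hL₀def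
  have hL₀bd : ∀ a : C(↥K, ℝ), ‖L₀ a‖ ≤ (∫ p, ‖G p‖ ∂μ) * ‖a‖ := by
    intro a
    calc ‖L₀ a‖ = ‖∫ p, E a p * G p ∂μ‖ := rfl
      _ ≤ ∫ p, ‖E a p * G p‖ ∂μ := norm_integral_le_integral_norm _
      _ ≤ ∫ p, ‖a‖ * ‖G p‖ ∂μ := by
          apply integral_mono (hInt a).norm (hGint.norm.const_mul _)
          intro p
          dsimp only
          rw [norm_mul]
          exact mul_le_mul_of_nonneg_right (hEbd a p) (norm_nonneg _)
      _ = (∫ p, ‖G p‖ ∂μ) * ‖a‖ := by rw [integral_const_mul, mul_comm]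
  set L : C(↥K, ℝ) →L[ℝ] ℝ := L₀.mkContinuous (∫ p, ‖G p‖ ∂μ) hL₀bd with hLdef
  -- coordinate functions
  set fst : C(↥K, ℝ) := ⟨fun q => (q : ℝ × ℝ).1, continuous_fst.comp continuous_subtype_val⟩
    with hfstdef
  set snd : C(↥K, ℝ) := ⟨fun q => (q : ℝ × ℝ).2, continuous_snd.comp continuous_subtype_val⟩
    with hsnddef
  set A : Subalgebra ℝ C(↥K, ℝ) := Algebra.adjoin ℝ {fst, snd} with hAdef
  have hsep : A.SeparatesPoints := by
    intro x y hxy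
    have hne : (x : ℝ × ℝ) ≠ (y : ℝ × ℝ) := fun h => hxy (Subtype.coe_injective h)
    rcases Prod.ext_iff.not.1 hne |> not_and_or.1 with h | h
    · exact ⟨_, ⟨fst, Algebra.subset_adjoin (by simp), rfl⟩, h⟩
    · exact ⟨_, ⟨snd, Algebra.subset_adjoin (by simp), rfl⟩, h⟩
  have htop : A.topologicalClosure = ⊤ :=
    ContinuousMap.subalgebra_topologicalClosure_eq_top_of_separatesPoints A hsep
  -- monomials are in the kernel of L
  have hmono : ∀ m n : ℕ, L (fst ^ m * snd ^ n) = 0 := by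
    intro m n
    have h1 : (fun p => E (fst ^ m * snd ^ n) p * G p)
        =ᵐ[μ] fun p => (p.1 ^ m * p.2 ^ n) * G p := by
      filter_upwards [ae_restrict_mem hKm] with p hp
      simp [hEdef, hp, hfstdef, hsnddef]
    calc L (fst ^ m * snd ^ n) = ∫ p, E (fst ^ m * snd ^ n) p * G p ∂μ := rfl
      _ = ∫ p, (p.1 ^ m * p.2 ^ n) * G p ∂μ := integral_congr_ae h1
      _ = 0 := hmom m n
  have hA : (A : Set C(↥K, ℝ)) ⊆ (L.ker : Set C(↥K, ℝ)) := by
    intro a ha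
    have h1 : a ∈ Submodule.span ℝ ((Submonoid.closure {fst, snd} : Submonoid C(↥K, ℝ)) :
        Set C(↥K, ℝ)) := by
      rw [← Algebra.adjoin_eq_span]
      exact ha
    refine Submodule.span_le.2 ?_ h1
    rintro x hx
    obtain ⟨m, n, rfl⟩ : ∃ m n : ℕ, x = fst ^ m * snd ^ n := by
      refine Submonoid.closure_induction ?_ ?_ ?_ hx
      · rintro x (rfl | rfl)
        · exact ⟨1, 0, by simp⟩
        · exact ⟨0, 1, by simp⟩
      · exact ⟨0, 0, by simp⟩
      · rintro x y - - ⟨m, n, rfl⟩ ⟨m', n', rfl⟩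
        exact ⟨m + m', n + n', by ring⟩
    exact hmono m n
  -- L vanishes identically
  have hL0 : ∀ a : C(↥K, ℝ), L a = 0 := by
    intro a
    have h1 : a ∈ closure (A : Set C(↥K, ℝ)) := by
      have : a ∈ A.topologicalClosure := htop ▸ Algebra.mem_top
      exact this
    have h2 : closure (A : Set C(↥K, ℝ)) ⊆
        (L.ker : Set C(↥K, ℝ)) := by
      rw [← (ContinuousLinearMap.isClosed_ker L).closure_eq]
      exact closure_mono hA
    exact h2 h1
  -- conclude G = 0 a.e. via smooth compactly supported test functions
  have hG0 : ∀ᵐ p ∂μ, G p = 0 := by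
    apply ae_eq_zero_of_integral_contDiff_smul_eq_zero hGint.locallyIntegrable
    intro φ hφ hφs
    set a : C(↥K, ℝ) := ⟨fun q => φ q, hφ.continuous.comp continuous_subtype_val⟩
    have h1 : (fun p => φ p • G p) =ᵐ[μ] fun p => E a p * G p := by
      filter_upwards [ae_restrict_mem hKm] with p hp
      simp [hEdef, hp, a, smul_eq_mul]
    calc ∫ p, φ p • G p ∂μ = ∫ p, E a p * G p ∂μ := integral_congr_ae h1
      _ = L a := rfl
      _ = 0 := hL0 a
  filter_upwards [hG0] with p hp
  have : Real.exp (2⁻¹ * p.1 + 2⁻¹ * p.2) * g p = 0 := hp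
  simpa using (mul_eq_zero.1 this).resolve_left (Real.exp_ne_zero _)
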